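/- (Logarithmic Weighted Sum Inequality) For every fixed integer n > 1 there exists a real number x₀ such that for all real x ≥ x₀, (Σ_{k=1}^{n} π(x/k)/log(x/k))² < (ex/log x)·(Σ_{k=1}^{n} π(x/(ek))/log(x/(ek))); equivalently, the function ℱ(x) = (Σ_{k=1}^{n} π(x/k)/log(x/k))² − (ex/log x)·Σ_{k=1}^{n} π(x/(ek))/log(x/(ek)) satisfies ℱ(x) < 0 for all sufficiently large x. -/

import Mathlib

open Real Finset

/-- The prime counting function `π(x)`: the number of primes `p ≤ x`. -/
noncomputable def primePi (x : ℝ) : ℝ := Nat.primeCounting ⌊x⌋₊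

/-- The second Chebyshev function `ψ(x) = ∑_{n ≤ x} Λ(n)`. -/
noncomputable def chebyshevPsi (x : ℝ) : ℝ :=
  ∑ n ∈ Finset.Iic ⌊x⌋₊, ArithmeticFunction.vonMangoldt n

lemma primeCounting_eq_card (N : ℕ) : (Nat.primeCounting N : ℝ) = ((N+1).primesBelow.card : ℝ) := by
  rw [Nat.primeCounting, ← Nat.primesBelow_card_eq_primeCounting']

lemma theta_le (N : ℕ) : ∑ p ∈ (N+1).primesBelow, Real.log p ≤ N * Real.log 4 := by
  have hne : ∀ p ∈ (N+1).primesBelow, (p:ℝ) ≠ 0 := fun p hp => by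
    exact_mod_cast (Nat.prime_of_mem_primesBelow hp).pos.ne'
  rw [← Real.log_prod hne]
  have hprod : ∏ p ∈ (N+1).primesBelow, (p:ℝ) = ((primorial N : ℕ) : ℝ) := by
    rw [primorial]
    push_cast
    rfl
  rw [hprod]
  calc Real.log ((primorial N : ℕ) : ℝ) ≤ Real.log ((4:ℝ)^N) := by
        apply Real.log_le_log (by exact_mod_cast primorial_pos N)
        exact_mod_cast primorial_le_4_pow N
    _ = N * Real.log 4 := by rw [Real.log_pow]

lemma primesBelow_card_le (m : ℕ) : (m+1).primesBelow.card ≤ m := by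
  have hsub : (m+1).primesBelow ⊆ Finset.Icc 1 m := by
    intro p hp
    have h1 := (Nat.prime_of_mem_primesBelow hp).one_lt
    have h2 := Nat.lt_of_mem_primesBelow hp
    rw [Finset.mem_Icc]; omega
  calc (m+1).primesBelow.card ≤ (Finset.Icc 1 m).card := Finset.card_le_card hsub
    _ = m := by rw [Nat.card_Icc]; omega

lemma log_four_lt : Real.log 4 < 1.3862943616 := by
  rw [show (4:ℝ) = 2^2 by norm_num, Real.log_pow]
  push_cast
  nlinarith [Real.log_two_lt_d9]

lemma primePi_le {y : ℝ} (hy : 3 ≤ y) : primePi y ≤ 5 * y / Real.log y := by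
  have hy0 : 0 < y := by linarith
  have hlogy : 0 < Real.log y := Real.log_pos (by linarith)
  set N := ⌊y⌋₊ with hN
  set m := ⌊Real.sqrt y⌋₊ with hm
  have hsq : Real.sqrt y * Real.sqrt y = y := Real.mul_self_sqrt hy0.le
  have hsnn : 0 ≤ Real.sqrt y := Real.sqrt_nonneg y
  have hs1 : 1 ≤ Real.sqrt y := by nlinarith
  have hmN : m ≤ N := Nat.floor_le_floor (by nlinarith : Real.sqrt y ≤ y)
  have hsub : (m+1).primesBelow ⊆ (N+1).primesBelow := by
    intro p hp
    have h1 := Nat.lt_of_mem_primesBelow hp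
    exact Nat.mem_primesBelow.2 ⟨by omega, Nat.prime_of_mem_primesBelow hp⟩
  set D := (N+1).primesBelow \ (m+1).primesBelow with hD
  have hcard : ((N+1).primesBelow.card : ℝ) = (D.card : ℝ) + ((m+1).primesBelow.card : ℝ) := by
    rw [← Nat.cast_add]
    norm_cast
    exact (Finset.card_sdiff_add_card_eq_card hsub).symm
  have hlogm : Real.log y / 2 ≤ Real.log ((m:ℝ)+1) := by
    have h1 : Real.sqrt y ≤ (m:ℝ)+1 := (Nat.lt_floor_add_one _).le
    calc Real.log y / 2 = Real.log (Real.sqrt y) := (Real.log_sqrt hy0.le).symm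
      _ ≤ Real.log ((m:ℝ)+1) := Real.log_le_log (Real.sqrt_pos.2 hy0) h1
  have hlogmpos : 0 < Real.log ((m:ℝ)+1) := lt_of_lt_of_le (by linarith) hlogm
  have hDsum : (D.card : ℝ) * Real.log ((m:ℝ)+1) ≤ ∑ p ∈ D, Real.log p := by
    rw [← nsmul_eq_mul]
    apply Finset.card_nsmul_le_sum
    intro p hp
    have hpmem := Finset.mem_sdiff.1 hp
    have hprime := Nat.prime_of_mem_primesBelow hpmem.1
    have hplt := Nat.lt_of_mem_primesBelow hpmem.1
    have hpge : m + 1 ≤ p := by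
      by_contra hcon
      exact hpmem.2 (Nat.mem_primesBelow.2 ⟨by omega, hprime⟩)
    apply Real.log_le_log (by positivity)
    exact_mod_cast hpge
  have hDsum2 : ∑ p ∈ D, Real.log p ≤ ∑ p ∈ (N+1).primesBelow, Real.log p := by
    apply Finset.sum_le_sum_of_subset_of_nonneg Finset.sdiff_subset
    intro p hp _
    exact Real.log_natCast_nonneg p
  have hNy : (N : ℝ) ≤ y := Nat.floor_le hy0.le
  have hDbound : (D.card : ℝ) * (Real.log y / 2) ≤ y * Real.log 4 := by
    calc (D.card : ℝ) * (Real.log y / 2) ≤ (D.card : ℝ) * Real.log ((m:ℝ)+1) := by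
          apply mul_le_mul_of_nonneg_left hlogm (by positivity)
      _ ≤ ∑ p ∈ (N+1).primesBelow, Real.log p := hDsum.trans hDsum2
      _ ≤ N * Real.log 4 := theta_le N
      _ ≤ y * Real.log 4 := by
          apply mul_le_mul_of_nonneg_right hNy (Real.log_nonneg (by norm_num))
  have hPm : ((m+1).primesBelow.card : ℝ) ≤ Real.sqrt y := by
    calc ((m+1).primesBelow.card : ℝ) ≤ (m : ℝ) := by exact_mod_cast primesBelow_card_le m
      _ ≤ Real.sqrt y := Nat.floor_le hsnn
  have hlogy2 : Real.log y ≤ 2 * Real.sqrt y - 2 := by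
    have h1 : Real.log (Real.sqrt y) ≤ Real.sqrt y - 1 :=
      Real.log_le_sub_one_of_pos (Real.sqrt_pos.2 hy0)
    rw [Real.log_sqrt hy0.le] at h1
    linarith
  have hpi : primePi y = (D.card : ℝ) + ((m+1).primesBelow.card : ℝ) := by
    rw [primePi, primeCounting_eq_card, hcard]
  rw [le_div_iff₀ hlogy, hpi]
  have hlog4 := log_four_lt
  have hlog4nn : 0 ≤ Real.log 4 := Real.log_nonneg (by norm_num)
  have hDnn : (0:ℝ) ≤ (D.card : ℝ) := by positivity
  have hPmmul : ((m+1).primesBelow.card : ℝ) * Real.log y ≤ Real.sqrt y * (2 * Real.sqrt y - 2) := by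
    apply mul_le_mul hPm hlogy2 hlogy.le hsnn
  nlinarith [hDbound, hPmmul]

lemma centralBinom_le_pow (n : ℕ) (hn : 0 < n) :
    Nat.centralBinom n ≤ (2*n) ^ ((2*n + 1).primesBelow.card) := by
  have h2n : 0 < 2*n := by omega
  calc Nat.centralBinom n
      = ∏ p ∈ Finset.range (2*n+1), p ^ (Nat.centralBinom n).factorization p :=
        (Nat.prod_pow_factorization_centralBinom n).symm
    _ = ∏ p ∈ (2*n+1).primesBelow, p ^ (Nat.centralBinom n).factorization p := by
        apply (Finset.prod_subset (Finset.filter_subset _ _) _).symm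
        intro p hp hnp
        have : ¬ p.Prime := by
          intro hpp
          exact hnp (Nat.mem_primesBelow.2 ⟨Finset.mem_range.1 hp, hpp⟩)
        rw [Nat.factorization_eq_zero_of_not_prime _ this, pow_zero]
    _ ≤ ∏ _p ∈ (2*n+1).primesBelow, 2*n := by
        apply Finset.prod_le_prod' 
        intro p _
        rw [Nat.centralBinom]
        exact Nat.pow_factorization_choose_le h2n
    _ = (2*n) ^ ((2*n + 1).primesBelow.card) := Finset.prod_const _

lemma primePi_ge {y : ℝ} (hy : 64 ≤ y) : y / (4 * Real.log y) ≤ primePi y := by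
  have hy0 : 0 < y := by linarith
  have hlogy : 0 < Real.log y := Real.log_pos (by linarith)
  set n := ⌊y/2⌋₊ with hn
  have hn4 : 4 ≤ n := Nat.le_floor (by norm_num; linarith)
  have hny : (n : ℝ) ≤ y/2 := Nat.floor_le (by linarith)
  have hny2 : y/2 - 1 ≤ (n:ℝ) := by
    have := Nat.lt_floor_add_one (y/2)
    linarith
  have h2ny : ((2*n : ℕ) : ℝ) ≤ y := by push_cast; linarith
  have hmono : (Nat.primeCounting (2*n) : ℝ) ≤ primePi y := by
    rw [primePi]
    have : 2*n ≤ ⌊y⌋₊ := Nat.le_floor h2ny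
    exact_mod_cast Nat.monotone_primeCounting this
  -- key inequality from central binomial coefficient
  have hkey : (4:ℝ)^n < (n:ℝ) * ((2*n:ℕ):ℝ) ^ (Nat.primeCounting (2*n)) := by
    have h1 : 4^n < n * Nat.centralBinom n := Nat.four_pow_lt_mul_centralBinom n hn4
    have h2 := centralBinom_le_pow n (by omega)
    have h3 : 4^n < n * (2*n) ^ ((2*n + 1).primesBelow.card) :=
      h1.trans_le (Nat.mul_le_mul_left n h2)
    have h4 : (2*n + 1).primesBelow.card = Nat.primeCounting (2*n) := by
      rw [Nat.primeCounting, ← Nat.primesBelow_card_eq_primeCounting']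
    rw [h4] at h3
    exact_mod_cast h3
  set P := (Nat.primeCounting (2*n) : ℝ) with hP
  have hPnn : 0 ≤ P := by positivity
  have hlogkey : (n:ℝ) * Real.log 4 < Real.log (n:ℝ) + P * Real.log ((2*n:ℕ):ℝ) := by
    have hlt := Real.log_lt_log (by positivity : (0:ℝ) < (4:ℝ)^n) hkey
    rw [Real.log_pow] at hlt
    rw [Real.log_mul (by positivity) (by positivity)] at hlt
    rw [Real.log_pow] at hlt
    exact hlt
  have hlog2n : Real.log ((2*n:ℕ):ℝ) ≤ Real.log y := by
    apply Real.log_le_log (by positivity) h2ny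
  have hlogn : Real.log (n:ℝ) ≤ Real.log y := by
    apply Real.log_le_log (by norm_num; omega) (by linarith)
  have hlog4 : (1.3862943606 : ℝ) ≤ Real.log 4 := by
    rw [show (4:ℝ) = 2^2 by norm_num, Real.log_pow]
    push_cast
    nlinarith [Real.log_two_gt_d9]
  have hsq : Real.sqrt y * Real.sqrt y = y := Real.mul_self_sqrt hy0.le
  have hsnn : 0 ≤ Real.sqrt y := Real.sqrt_nonneg y
  have hs8 : 8 ≤ Real.sqrt y := by nlinarith
  have hlogy2 : Real.log y ≤ 2 * Real.sqrt y - 2 := by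
    have h1 : Real.log (Real.sqrt y) ≤ Real.sqrt y - 1 :=
      Real.log_le_sub_one_of_pos (Real.sqrt_pos.2 hy0)
    rw [Real.log_sqrt hy0.le] at h1
    linarith
  rw [div_le_iff₀ (by positivity)]
  have hPlog : P * Real.log ((2*n:ℕ):ℝ) ≤ P * Real.log y :=
    mul_le_mul_of_nonneg_left hlog2n hPnn
  have hPlog2 : P * Real.log y ≤ primePi y * Real.log y :=
    mul_le_mul_of_nonneg_right hmono hlogy.le
  have hnlog4 : (y/2 - 1) * (1.3862943606 : ℝ) ≤ (n:ℝ) * Real.log 4 := by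
    apply mul_le_mul hny2 hlog4 (by norm_num) (by positivity)
  nlinarith

lemma exp_one_lt_three : Real.exp 1 < 3 := by
  nlinarith [Real.exp_one_lt_d9]

set_option maxHeartbeats 1000000 in
theorem stmt16 (n : ℕ) (hn : 1 < n) :
    ∃ x₀ : ℝ, ∀ x ≥ x₀,
      (∑ k ∈ Finset.Icc 1 n, primePi (x / (k : ℝ)) / Real.log (x / (k : ℝ))) ^ 2 <
        (Real.exp 1 * x / Real.log x) * (∑ k ∈ Finset.Icc 1 n, primePi (x / (Real.exp 1 * (k : ℝ))) / Real.log (x / (Real.exp 1 * (k : ℝ)))) := by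
  obtain ⟨e, he⟩ : ∃ y : ℝ, Real.exp 1 = y := ⟨_, rfl⟩
  have he1 : 1 < e := by
    have := Real.exp_one_gt_d9; rw [← he]; linarith
  have he3 : e < 3 := by rw [← he]; exact _root_.exp_one_lt_three
  have he0 : 0 < e := by linarith
  refine ⟨Real.exp (1600*(n:ℝ)^2 + 1) + (n:ℝ)^2 + 9*n + 192, fun x hx => ?_⟩
  rw [he]
  have hnR : (1:ℝ) ≤ (n:ℝ) := by exact_mod_cast hn.le
  have hexp_pos : 0 < Real.exp (1600*(n:ℝ)^2 + 1) := Real.exp_pos _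
  have hx192 : 192 ≤ x := by nlinarith
  have hx9n : 9*(n:ℝ) ≤ x := by nlinarith
  have hxn2 : (n:ℝ)^2 ≤ x := by nlinarith
  have hxexp : Real.exp (1600*(n:ℝ)^2 + 1) ≤ x := by nlinarith
  have hx0 : 0 < x := by linarith
  have hlogx : 0 < Real.log x := Real.log_pos (by linarith)
  have hlogx_big : 1600*(n:ℝ)^2 + 1 ≤ Real.log x := by
    have := Real.log_le_log hexp_pos hxexp
    rwa [Real.log_exp] at this
  -- Upper bound on each term of the first sum
  have hterm1 : ∀ k ∈ Finset.Icc 1 n,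
      primePi (x / (k:ℝ)) / Real.log (x / (k:ℝ)) ≤ 20*x/(Real.log x)^2 := by
    intro k hk
    obtain ⟨hk1, hkn⟩ := Finset.mem_Icc.1 hk
    have hk1R : (1:ℝ) ≤ (k:ℝ) := by exact_mod_cast hk1
    have hknR : (k:ℝ) ≤ (n:ℝ) := by exact_mod_cast hkn
    have hk0 : (0:ℝ) < (k:ℝ) := by linarith
    have hxk3 : 3 ≤ x / (k:ℝ) := by
      rw [le_div_iff₀ hk0]; nlinarith
    have hlogxk : Real.log x / 2 ≤ Real.log (x / (k:ℝ)) := by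
      rw [Real.log_div (by positivity) (by positivity)]
      have hlogk : Real.log (k:ℝ) ≤ Real.log x / 2 := by
        have h1 : Real.log ((k:ℝ)^2) ≤ Real.log x := by
          apply Real.log_le_log (by positivity); nlinarith
        rw [Real.log_pow] at h1; push_cast at h1; linarith
      linarith
    have hlogxk0 : 0 < Real.log (x / (k:ℝ)) := by linarith
    calc primePi (x / (k:ℝ)) / Real.log (x / (k:ℝ))
        ≤ (5 * (x/(k:ℝ)) / Real.log (x/(k:ℝ))) / Real.log (x / (k:ℝ)) :=
          (div_le_div_iff_of_pos_right hlogxk0).2 (primePi_le hxk3)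
      _ = 5 * (x/(k:ℝ)) / (Real.log (x/(k:ℝ)))^2 := by rw [div_div, ← sq]
      _ ≤ 5 * x / (Real.log x / 2)^2 := by
          have h1 : 5 * (x/(k:ℝ)) ≤ 5 * x := by
            have := div_le_self hx0.le hk1R; linarith
          have h2 : (0:ℝ) < (Real.log x / 2)^2 := by positivity
          have h3 : (Real.log x / 2)^2 ≤ (Real.log (x/(k:ℝ)))^2 :=
            pow_le_pow_left₀ (by positivity) hlogxk 2
          exact div_le_div₀ (by positivity) h1 h2 h3
      _ = 20*x/(Real.log x)^2 := by ring
  -- the first sum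
  set S1 := ∑ k ∈ Finset.Icc 1 n, primePi (x / (k:ℝ)) / Real.log (x / (k:ℝ)) with hS1
  have hS1nn : 0 ≤ S1 := by
    apply Finset.sum_nonneg
    intro k hk
    obtain ⟨hk1, hkn⟩ := Finset.mem_Icc.1 hk
    have hk1R : (1:ℝ) ≤ (k:ℝ) := by exact_mod_cast hk1
    have hxk3 : 3 ≤ x / (k:ℝ) := by
      rw [le_div_iff₀ (by linarith)]
      have hknR : (k:ℝ) ≤ (n:ℝ) := by exact_mod_cast hkn
      nlinarith
    have : 0 < Real.log (x / (k:ℝ)) := Real.log_pos (by linarith)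
    have hpinn : (0:ℝ) ≤ primePi (x / (k:ℝ)) := by
      rw [primePi]; exact Nat.cast_nonneg _
    positivity
  have hS1le : S1 ≤ n * (20*x/(Real.log x)^2) := by
    rw [hS1]
    calc ∑ k ∈ Finset.Icc 1 n, primePi (x / (k:ℝ)) / Real.log (x / (k:ℝ))
        ≤ ∑ _k ∈ Finset.Icc 1 n, 20*x/(Real.log x)^2 := Finset.sum_le_sum hterm1
      _ = n * (20*x/(Real.log x)^2) := by
          simp [Finset.sum_const, Nat.card_Icc, nsmul_eq_mul]
  have hS1sq : S1^2 ≤ 400*(n:ℝ)^2*x^2/(Real.log x)^4 := by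
    calc S1^2 ≤ (n * (20*x/(Real.log x)^2))^2 := by
          apply pow_le_pow_left₀ hS1nn hS1le
      _ = 400*(n:ℝ)^2*x^2/(Real.log x)^4 := by
          field_simp
          try ring
  -- lower bound for second sum via the k = 1 term
  have hxe64 : 64 ≤ x / e := by
    rw [le_div_iff₀ he0]; nlinarith
  have hlogxe0 : 0 < Real.log (x/e) := Real.log_pos (by linarith)
  have hlogxe : Real.log (x/e) ≤ Real.log x := by
    apply Real.log_le_log (by linarith)
    exact div_le_self hx0.le he1.le
  have hterm2 : x/(4*e*(Real.log x)^2) ≤ primePi (x/e) / Real.log (x/e) := by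
    calc x/(4*e*(Real.log x)^2) = (x/e)/(4*(Real.log x)^2) := by ring
      _ ≤ (x/e)/(4*(Real.log (x/e))^2) := by
          apply div_le_div_of_nonneg_left (div_nonneg hx0.le he0.le)
            (mul_pos (by norm_num) (pow_pos hlogxe0 2))
          nlinarith [pow_le_pow_left₀ hlogxe0.le hlogxe 2]
      _ = ((x/e) / (4 * Real.log (x/e))) / Real.log (x/e) := by ring
      _ ≤ primePi (x/e) / Real.log (x/e) :=
          (div_le_div_iff_of_pos_right hlogxe0).2 (primePi_ge hxe64)
  set S2 := ∑ k ∈ Finset.Icc 1 n, primePi (x / (e * (k:ℝ))) / Real.log (x / (e * (k:ℝ))) with hS2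
  have hS2nn : ∀ k ∈ Finset.Icc 1 n, 0 ≤ primePi (x / (e * (k:ℝ))) / Real.log (x / (e * (k:ℝ))) := by
    intro k hk
    obtain ⟨hk1, hkn⟩ := Finset.mem_Icc.1 hk
    have hk1R : (1:ℝ) ≤ (k:ℝ) := by exact_mod_cast hk1
    have hknR : (k:ℝ) ≤ (n:ℝ) := by exact_mod_cast hkn
    have hek1 : 1 < x / (e * (k:ℝ)) := by
      rw [lt_div_iff₀ (mul_pos he0 (by linarith : (0:ℝ) < (k:ℝ)))]
      have h1 : e * (k:ℝ) < 3 * (k:ℝ) := mul_lt_mul_of_pos_right he3 (by linarith)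
      have h2 : (3:ℝ) * (k:ℝ) ≤ 3 * (n:ℝ) := by linarith
      linarith
    have : 0 < Real.log (x / (e * (k:ℝ))) := Real.log_pos hek1
    have hpinn : (0:ℝ) ≤ primePi (x / (e * (k:ℝ))) := by
      rw [primePi]; exact Nat.cast_nonneg _
    exact div_nonneg hpinn this.le
  have hS2ge : x/(4*e*(Real.log x)^2) ≤ S2 := by
    have hmem : 1 ∈ Finset.Icc 1 n := Finset.mem_Icc.2 ⟨le_refl 1, hn.le⟩
    have h1 := Finset.single_le_sum hS2nn hmem
    simp only [Nat.cast_one, mul_one] at h1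
    exact le_trans hterm2 h1
  -- combine
  have hRHS : x^2/(4*(Real.log x)^3) ≤ (e * x / Real.log x) * S2 := by
    calc x^2/(4*(Real.log x)^3) = (e * x / Real.log x) * (x/(4*e*(Real.log x)^2)) := by
          field_simp
      _ ≤ (e * x / Real.log x) * S2 :=
          mul_le_mul_of_nonneg_left hS2ge
            (div_nonneg (mul_nonneg he0.le hx0.le) hlogx.le)
  have hmid : 400*(n:ℝ)^2*x^2/(Real.log x)^4 < x^2/(4*(Real.log x)^3) := by
    rw [div_lt_div_iff₀ (by positivity) (by positivity)]
    nlinarith [mul_pos (mul_pos (pow_pos hx0 2) (pow_pos hlogx 3))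
      (show (0:ℝ) < Real.log x - 1600*(n:ℝ)^2 by nlinarith)]
  calc S1^2 ≤ 400*(n:ℝ)^2*x^2/(Real.log x)^4 := hS1sq
    _ < x^2/(4*(Real.log x)^3) := hmid
    _ ≤ (e * x / Real.log x) * S2 := hRHS
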